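/- For all real x with e^{-n} < x ≤ 1 and (log x)^2 ≤ n/2, there exists an absolute constant C such that |(1/x)·(1 + (log x)/n)^n − 1| ≤ C·(log x)^2/n. -/

import Mathlib

theorem stmt2 :
    ∃ C : ℝ, 0 < C ∧ ∀ n x : ℝ, 1 ≤ n → Real.exp (-n) < x → x ≤ 1 →
      (Real.log x) ^ 2 ≤ n / 2 →
      |(1 / x) * (1 + Real.log x / n) ^ n - 1| ≤ C * (Real.log x) ^ 2 / n := by
  refine ⟨4, by norm_num, ?_⟩
  intro n x hn hlx hx1 hsq
  have hn0 : (0:ℝ) < n := lt_of_lt_of_le one_pos hn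
  have hx0 : 0 < x := lt_trans (Real.exp_pos _) hlx
  set t := Real.log x with ht
  have ht0 : t ≤ 0 := Real.log_nonpos (le_of_lt hx0) hx1
  -- lower bound on t from t^2 ≤ n/2
  have htlb : -t ≤ 3 * n / 4 := by
    have h1 : -t ≤ Real.sqrt (n / 2) := by
      rw [show (-t) = Real.sqrt ((-t)^2) by rw [Real.sqrt_sq (by linarith)]]
      apply Real.sqrt_le_sqrt
      nlinarith
    have h2 : Real.sqrt (n / 2) ≤ 3 * n / 4 := by
      rw [show (3 * n / 4) = Real.sqrt ((3 * n / 4)^2) by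
        rw [Real.sqrt_sq (by linarith)]]
      apply Real.sqrt_le_sqrt
      nlinarith
    linarith
  set v : ℝ := 1 + t / n with hv
  have hnv : n * v = n + t := by rw [hv, mul_add, mul_one, mul_div_cancel₀ t hn0.ne']
  have hv4 : (1:ℝ)/4 ≤ v := by
    have h : -(3/4 : ℝ) ≤ t / n := by
      rw [le_div_iff₀ hn0]; linarith
    rw [hv]; linarith
  have hv0 : 0 < v := lt_of_lt_of_le (by norm_num) hv4
  have htv : t = n * (v - 1) := by
    have : n * (v - 1) = n * v - n := by ring
    rw [this, hnv]; ring
  -- log bounds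
  have hlog1 : Real.log v ≤ v - 1 := Real.log_le_sub_one_of_pos hv0
  have hlog2 : 1 - 1/v ≤ Real.log v := by
    have := Real.log_le_sub_one_of_pos (show (0:ℝ) < 1/v by positivity)
    rw [Real.log_div one_ne_zero (ne_of_gt hv0), Real.log_one] at this
    linarith
  set d : ℝ := Real.log v * n - t with hd
  have hd0 : d ≤ 0 := by
    have h : Real.log v * n ≤ (v - 1) * n :=
      mul_le_mul_of_nonneg_right hlog1 hn0.le
    rw [hd, htv]; nlinarith
  have key : (v - 1) - Real.log v ≤ 4 * (v - 1)^2 := by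
    clear_value t v
    have h : (v - 1) - (1 - 1/v) ≤ 4 * (v - 1)^2 := by
      rw [show (v - 1) - (1 - 1/v) = (v - 1)^2 / v by field_simp]
      rw [div_le_iff₀ hv0]
      nlinarith [sq_nonneg (v - 1)]
    nlinarith [hlog2, h]
  have hdlb : -d ≤ 4 * t^2 / n := by
    rw [hd, htv]
    rw [show 4 * (n * (v - 1))^2 / n = n * (4 * (v - 1)^2) by
      field_simp]
    nlinarith [mul_le_mul_of_nonneg_left key hn0.le]
  -- rewrite expression as exp d
  have hexpr : (1 / x) * (1 + t / n) ^ n = Real.exp d := by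
    rw [Real.rpow_def_of_pos hv0]
    rw [show (1:ℝ)/x = Real.exp (-t) by
      rw [ht, Real.exp_neg, Real.exp_log hx0, one_div]]
    rw [← Real.exp_add]
    congr 1
    rw [hd]
    ring
  rw [hexpr, abs_le]
  constructor
  · have := Real.add_one_le_exp d
    linarith
  · have h1 : Real.exp d ≤ 1 := by
      rw [show (1:ℝ) = Real.exp 0 by simp]
      exact Real.exp_le_exp.mpr hd0
    have h2 : (0:ℝ) ≤ 4 * t^2 / n := by positivity
    linarith
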